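/- Let α ∈ (0,1) be irrational with continued fraction expansion [a_1 a_2 …] and convergent denominators q_n, let f = 2χ_U − 1 be a mean-zero indicator function where U is a union of B disjoint intervals, let x ∈ S¹, and fix n ≥ 2. For l = 1, …, a_{n+1}, let σ_l be the orbit segment 𝒪_α[q_{n−1} + (l−1)q_n + 1, q_{n−1} + l q_n], and let s(σ_l) = Σ_i f(T^i x) over that range of indices. Then the set C = {l ∈ [1, a_{n+1} − 1] : s(σ_l) ≠ s(σ_{l+1})} has cardinality |C| ≤ 2B. -/

import Mathlib

open MeasureTheory Filter Topology

noncomputable section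

open GenContFract

namespace Lem32

variable {α : ℝ}

lemma not_term (hirr : Irrational α) (m : ℕ) : ¬(GenContFract.of α).TerminatedAt m := by
  intro h
  obtain ⟨q, hq⟩ := (GenContFract.terminates_iff_rat α).mp ⟨m, h⟩
  exact hirr ⟨q, hq.symm⟩

lemma stream_some (hirr : Irrational α) (m : ℕ) :
    ∃ ifp, IntFractPair.stream α m = some ifp ∧ ifp.fr ≠ 0 := by
  have h1 : ¬(GenContFract.of α).TerminatedAt m := not_term hirr m
  rw [of_terminatedAt_n_iff_succ_nth_intFractPair_stream_eq_none] at h1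
  obtain ⟨ifp_succ, hsucc⟩ := Option.ne_none_iff_exists'.mp h1
  obtain ⟨ifp, h₁, h₂, _⟩ := IntFractPair.succ_nth_stream_eq_some_iff.mp hsucc
  exact ⟨ifp, h₁, h₂⟩

lemma dens_pos (hirr : Irrational α) (m : ℕ) : (1:ℝ) ≤ (GenContFract.of α).dens m := by
  have := succ_nth_fib_le_of_nth_den (v := α) (n := m)
    (Or.inr (not_term hirr (m-1)))
  calc (1:ℝ) ≤ (Nat.fib (m+1) : ℝ) := by
        exact_mod_cast Nat.succ_le_of_lt (Nat.fib_pos.mpr m.succ_pos)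
    _ ≤ _ := this

/-- `D m = qₘ α - pₘ`. -/
noncomputable def D (α : ℝ) (m : ℕ) : ℝ :=
  (GenContFract.of α).dens m * α - (GenContFract.of α).nums m

lemma D_eq (hirr : Irrational α) (m : ℕ) :
    D α m = (GenContFract.of α).dens m * (α - (GenContFract.of α).convs m) := by
  have hd : (GenContFract.of α).dens m ≠ 0 := by
    have := dens_pos hirr m; linarith
  rw [conv_eq_num_div_den, D]
  field_simp

lemma sign_D (hirr : Irrational α) (m : ℕ) : 0 < (-1)^m * D α m := by
  obtain ⟨ifp, hst, hfr⟩ := stream_some hirr m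
  have hsub := sub_convs_eq hst
  simp only [] at hsub
  rw [if_neg hfr] at hsub
  have hfr0 : 0 < ifp.fr := lt_of_le_of_ne (IntFractPair.nth_stream_fr_nonneg hst) (Ne.symm hfr)
  have hB : (0:ℝ) < ((GenContFract.of α).contsAux (m+1)).b := by
    have h := dens_pos hirr m
    rw [den_eq_conts_b, nth_cont_eq_succ_nth_contAux] at h
    linarith
  have hpB : (0:ℝ) ≤ ((GenContFract.of α).contsAux m).b := zero_le_of_contsAux_b
  have hden : 0 < ((GenContFract.of α).contsAux (m+1)).b *
      (ifp.fr⁻¹ * ((GenContFract.of α).contsAux (m+1)).b + ((GenContFract.of α).contsAux m).b) := by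
    have : 0 < ifp.fr⁻¹ := inv_pos.mpr hfr0
    positivity
  rw [D_eq hirr m, hsub]
  have hdm : (0:ℝ) < (GenContFract.of α).dens m := lt_of_lt_of_le one_pos (dens_pos hirr m)
  have h2 : ((-1:ℝ)^m)*((-1:ℝ)^m) = 1 := by
    rw [← pow_add, ← two_mul, pow_mul, neg_one_sq, one_pow]
  set X := ((GenContFract.of α).contsAux (m+1)).b *
      (ifp.fr⁻¹ * ((GenContFract.of α).contsAux (m+1)).b + ((GenContFract.of α).contsAux m).b)
  have key : (-1:ℝ)^m * ((GenContFract.of α).dens m * ((-1)^m / X)) =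
      (GenContFract.of α).dens m / X := by
    calc (-1:ℝ)^m * ((GenContFract.of α).dens m * ((-1)^m / X))
        = ((-1:ℝ)^m*(-1:ℝ)^m) * ((GenContFract.of α).dens m / X) := by ring
      _ = _ := by rw [h2, one_mul]
  rw [key]
  positivity


lemma D_abs_le (hirr : Irrational α) (m : ℕ) :
    |D α m| ≤ 1 / (GenContFract.of α).dens (m+1) := by
  have h1 : (0:ℝ) < (GenContFract.of α).dens m := lt_of_lt_of_le one_pos (dens_pos hirr m)
  have h2 : (0:ℝ) < (GenContFract.of α).dens (m+1) := lt_of_lt_of_le one_pos (dens_pos hirr (m+1))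
  have := abs_sub_convs_le (not_term hirr m)
  rw [D_eq hirr m, abs_mul, abs_of_pos h1]
  calc (GenContFract.of α).dens m * |α - (GenContFract.of α).convs m|
      ≤ (GenContFract.of α).dens m *
        (1 / ((GenContFract.of α).dens m * (GenContFract.of α).dens (m+1))) := by
        exact mul_le_mul_of_nonneg_left this h1.le
    _ = 1 / (GenContFract.of α).dens (m+1) := by field_simp
  
lemma D_pos_of_even (hirr : Irrational α) {m : ℕ} (h : Even m) : 0 < D α m := by
  have := sign_D hirr m
  rwa [h.neg_one_pow, one_mul] at this

lemma D_neg_of_odd (hirr : Irrational α) {m : ℕ} (h : Odd m) : D α m < 0 := by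
  have := sign_D hirr m
  rw [h.neg_one_pow] at this
  linarith

lemma D_ne (hirr : Irrational α) (m : ℕ) : D α m ≠ 0 := by
  rcases Nat.even_or_odd m with h | h
  · exact (D_pos_of_even hirr h).ne'
  · exact (D_neg_of_odd hirr h).ne

lemma s_some (hirr : Irrational α) (m : ℕ) :
    ∃ gp : GenContFract.Pair ℝ, (GenContFract.of α).s.get? m = some gp ∧ gp.a = 1 ∧
      ∃ z : ℤ, 1 ≤ z ∧ gp.b = (z:ℝ) := by
  have h1 : ¬(GenContFract.of α).TerminatedAt m := not_term hirr m
  rw [GenContFract.TerminatedAt, Stream'.Seq.TerminatedAt] at h1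
  obtain ⟨gp, hgp⟩ := Option.ne_none_iff_exists'.mp h1
  refine ⟨gp, hgp, of_partNum_eq_one (partNum_eq_s_a hgp), ?_⟩
  obtain ⟨z, hz⟩ := exists_int_eq_of_partDen (partDen_eq_s_b hgp)
  refine ⟨z, ?_, hz⟩
  have := of_one_le_get?_partDen (partDen_eq_s_b hgp)
  rw [hz] at this
  exact_mod_cast this

lemma exists_int_conts (hirr : Irrational α) : ∀ m : ℕ,
    ∃ zp zq : ℤ, (GenContFract.of α).nums m = (zp:ℝ) ∧ (GenContFract.of α).dens m = (zq:ℝ) := by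
  have key : ∀ m : ℕ,
      (∃ zp zq : ℤ, (GenContFract.of α).nums m = (zp:ℝ) ∧ (GenContFract.of α).dens m = (zq:ℝ)) ∧
      (∃ zp zq : ℤ, (GenContFract.of α).nums (m+1) = (zp:ℝ) ∧
        (GenContFract.of α).dens (m+1) = (zq:ℝ)) := by
    intro m
    induction m with
    | zero =>
      constructor
      · exact ⟨⌊α⌋, 1, by rw [zeroth_num_eq_h, of_h_eq_floor], by rw [zeroth_den_eq_one]; norm_num⟩
      · obtain ⟨gp, hgp, ha, z, hz1, hz⟩ := s_some hirr 0
        exact ⟨z * ⌊α⌋ + 1, z, by rw [first_num_eq hgp, ha, hz, of_h_eq_floor]; push_cast; ring,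
          by rw [first_den_eq hgp, hz]⟩
    | succ m ih =>
      refine ⟨ih.2, ?_⟩
      obtain ⟨gp, hgp, ha, z, hz1, hz⟩ := s_some hirr (m+1)
      obtain ⟨⟨p0, q0, hp0, hq0⟩, ⟨p1, q1, hp1, hq1⟩⟩ := ih
      refine ⟨z * p1 + p0, z * q1 + q0, ?_, ?_⟩
      · rw [nums_recurrence hgp hp0 hp1, ha, hz]; push_cast; ring
      · rw [dens_recurrence hgp hq0 hq1, ha, hz]; push_cast; ring
  exact fun m => (key m).1

lemma D_rec (hirr : Irrational α) {m : ℕ} {b : ℝ}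
    (hb : (GenContFract.of α).partDens.get? (m+1) = some b) :
    D α (m+2) = b * D α (m+1) + D α m := by
  obtain ⟨gp, hgp, hb'⟩ := exists_s_b_of_partDen hb
  have ha : gp.a = 1 := of_partNum_eq_one (partNum_eq_s_a hgp)
  have hnum := nums_recurrence hgp (rfl : (GenContFract.of α).nums m = _)
    (rfl : (GenContFract.of α).nums (m+1) = _)
  have hden := dens_recurrence hgp (rfl : (GenContFract.of α).dens m = _)
    (rfl : (GenContFract.of α).dens (m+1) = _)
  simp only [D, hnum, hden, ha, hb']
  ring


lemma abs_le_abs_add_of_mul_pos {a b : ℝ} (h : 0 < a * b) : |a| ≤ |a + b| := by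
  rcases lt_trichotomy a 0 with ha|ha|ha
  · have hb : b < 0 := by nlinarith
    rw [abs_of_neg ha, abs_of_neg (by linarith)]; linarith
  · simp [ha]
  · have hb : 0 < b := by nlinarith
    rw [abs_of_pos ha, abs_of_pos (by linarith)]; linarith

lemma D_mul_D_neg (hirr : Irrational α) (N : ℕ) : D α N * D α (N+1) < 0 := by
  rcases Nat.even_or_odd N with h | h
  · exact mul_neg_of_pos_of_neg (D_pos_of_even hirr h) (D_neg_of_odd hirr (h.add_one))
  · exact mul_neg_of_neg_of_pos (D_neg_of_odd hirr h)
      (D_pos_of_even hirr (Odd.add_one h))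

lemma best_approx (hirr : Irrational α) (N : ℕ) (z p : ℤ) (hz : z ≠ 0)
    (hzlt : |(z:ℝ)| < (GenContFract.of α).dens (N+1)) :
    |D α N| ≤ |(z:ℝ) * α - (p:ℝ)| := by
  obtain ⟨PN, QN, hPN, hQN⟩ := exists_int_conts hirr N
  obtain ⟨PN1, QN1, hPN1, hQN1⟩ := exists_int_conts hirr (N+1)
  have hQNpos : 1 ≤ QN := by
    have := dens_pos hirr N; rw [hQN] at this; exact_mod_cast this
  have hQN1pos : 1 ≤ QN1 := by
    have := dens_pos hirr (N+1); rw [hQN1] at this; exact_mod_cast this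
  have hzQ : |z| < QN1 := by
    rw [hQN1] at hzlt; exact_mod_cast (by push_cast; exact hzlt : (|z|:ℝ) < (QN1:ℝ))
  -- determinant
  have hdetR := SimpContFract.determinant (s := SimpContFract.of α) (not_term hirr N)
  have hdetZ : PN * QN1 - QN * PN1 = (-1)^(N+1) := by
    have : ((PN * QN1 - QN * PN1 : ℤ) : ℝ) = (((-1:ℤ))^(N+1) : ℝ) := by
      push_cast
      rw [← hPN, ← hQN, ← hPN1, ← hQN1]
      exact_mod_cast hdetR
    exact_mod_cast this
  set σ : ℤ := (-1)^(N+1) with hσdef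
  have hσ : σ * σ = 1 := by
    rw [hσdef, ← pow_add, ← two_mul, pow_mul]; norm_num
  set x : ℤ := σ*(p*QN1 - z*PN1) with hxdef
  set y : ℤ := σ*(z*PN - p*QN) with hydef
  have hx : x*QN + y*QN1 = z := by
    have e1 : x*QN + y*QN1 = σ * σ * z - σ * z * (σ - (PN*QN1 - QN*PN1)) := by
      rw [hxdef, hydef]; ring
    rw [hdetZ] at e1
    rw [e1, sub_self, mul_zero, sub_zero, hσ, one_mul]
  have hp : x*PN + y*PN1 = p := by
    have e1 : x*PN + y*PN1 = σ * σ * p - σ * p * (σ - (PN*QN1 - QN*PN1)) := by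
      rw [hxdef, hydef]; ring
    rw [hdetZ] at e1
    rw [e1, sub_self, mul_zero, sub_zero, hσ, one_mul]
  have hDN : D α N = (QN:ℝ)*α - (PN:ℝ) := by rw [D, hQN, hPN]
  have hDN1 : D α (N+1) = (QN1:ℝ)*α - (PN1:ℝ) := by rw [D, hQN1, hPN1]
  have hxR : (x:ℝ)*(QN:ℝ) + (y:ℝ)*(QN1:ℝ) = (z:ℝ) := by exact_mod_cast hx
  have hpR : (x:ℝ)*(PN:ℝ) + (y:ℝ)*(PN1:ℝ) = (p:ℝ) := by exact_mod_cast hp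
  have hkey : (z:ℝ) * α - (p:ℝ) = (x:ℝ) * D α N + (y:ℝ) * D α (N+1) := by
    rw [hDN, hDN1]
    linear_combination α * hxR.symm - hpR.symm
  rcases eq_or_ne y 0 with hy | hy
  · -- y = 0
    have hxne : x ≠ 0 := by
      intro h0; apply hz; rw [← hx, h0, hy]; ring
    have h1 : (1:ℝ) ≤ |(x:ℝ)| := by exact_mod_cast Int.one_le_abs hxne
    rw [hkey, hy]
    push_cast
    rw [zero_mul, add_zero, abs_mul]
    nlinarith [abs_nonneg (D α N)]
  · rcases eq_or_ne x 0 with hx0 | hx0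
    · -- x = 0 : contradiction
      exfalso
      rw [hx0, zero_mul, zero_add] at hx
      have : QN1 ≤ |z| := by
        rw [← hx, abs_mul]
        calc QN1 = 1 * QN1 := (one_mul _).symm
          _ ≤ |y| * |QN1| := by
            have h1 : 1 ≤ |y| := Int.one_le_abs hy
            have h2 : QN1 ≤ |QN1| := le_abs_self _
            nlinarith
      omega
    · -- x ≠ 0, y ≠ 0
      have hxy : x * y < 0 := by
        rcases lt_trichotomy (x*y) 0 with h | h | h
        · exact h
        · exfalso; rcases mul_eq_zero.mp h with h|h <;> [exact hx0 h; exact hy h]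
        · exfalso
          rcases lt_trichotomy x 0 with hxs | hxs | hxs
          · have hys : y < 0 := by nlinarith
            have : z ≤ -(QN + QN1) := by
              rw [← hx]; nlinarith
            have h5 := neg_abs_le z
            omega
          · exact hx0 hxs
          · have hys : 0 < y := by nlinarith
            have : QN + QN1 ≤ z := by rw [← hx]; nlinarith
            have h5 := le_abs_self z
            omega
      have hprod : 0 < ((x:ℝ) * D α N) * ((y:ℝ) * D α (N+1)) := by
        have h1 : ((x:ℝ) * D α N) * ((y:ℝ) * D α (N+1)) =
            ((x*y : ℤ):ℝ) * (D α N * D α (N+1)) := by push_cast; ring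
        rw [h1]
        apply mul_pos_of_neg_of_neg
        · exact_mod_cast hxy
        · exact D_mul_D_neg hirr N
      have h1 : (1:ℝ) ≤ |(x:ℝ)| := by exact_mod_cast Int.one_le_abs hx0
      calc |D α N| ≤ |(x:ℝ)| * |D α N| := by nlinarith [abs_nonneg (D α N)]
        _ = |(x:ℝ) * D α N| := (abs_mul _ _).symm
        _ ≤ |(x:ℝ) * D α N + (y:ℝ) * D α (N+1)| := abs_le_abs_add_of_mul_pos hprod
        _ = |(z:ℝ) * α - (p:ℝ)| := by rw [hkey]


lemma cross {a b s s' : ℝ} (hss : s ≤ s')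
    (h : ¬((∃ k:ℤ, s + (k:ℝ) ∈ Set.Ico a b) ↔ (∃ k:ℤ, s' + (k:ℝ) ∈ Set.Ico a b))) :
    ∃ k:ℤ, (a + (k:ℝ) ∈ Set.Ioc s s') ∨ (b + (k:ℝ) ∈ Set.Ioc s s') := by
  by_contra hno
  push_neg at hno
  apply h
  constructor
  · rintro ⟨k, hk1, hk2⟩
    refine ⟨k, by linarith, ?_⟩
    by_contra hb
    push_neg at hb
    exact absurd ⟨by push_cast; linarith, by push_cast; linarith⟩ (hno (-k)).2
  · rintro ⟨k, hk1, hk2⟩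
    refine ⟨k, ?_, by linarith⟩
    by_contra ha
    push_neg at ha
    exact absurd ⟨by push_cast; linarith, by push_cast; linarith⟩ (hno (-k)).1

lemma coe_eq_coe_iff {s t : ℝ} :
    (s : UnitAddCircle) = (t : UnitAddCircle) ↔ ∃ k : ℤ, s = t + (k:ℝ) := by
  constructor
  · intro h
    have := QuotientAddGroup.eq_iff_sub_mem.mp h
    obtain ⟨k, hk⟩ := AddSubgroup.mem_zmultiples_iff.mp this
    exact ⟨k, by simp at hk; linarith⟩
  · rintro ⟨k, rfl⟩
    apply (QuotientAddGroup.eq_iff_sub_mem).mpr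
    apply AddSubgroup.mem_zmultiples_iff.mpr
    exact ⟨k, by simp⟩

lemma coe_add_int (r : ℝ) (k : ℤ) : ((r + (k:ℝ) : ℝ) : UnitAddCircle) = (r : UnitAddCircle) :=
  coe_eq_coe_iff.mpr ⟨k, rfl⟩

lemma mem_arc_iff {a b t : ℝ} :
    ((t : UnitAddCircle) ∈ (fun r : ℝ => (r : UnitAddCircle)) '' Set.Ico a b) ↔
      ∃ k : ℤ, t + (k:ℝ) ∈ Set.Ico a b := by
  constructor
  · rintro ⟨s, hs, hst⟩
    obtain ⟨k, hk⟩ := coe_eq_coe_iff.mp hst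
    exact ⟨k, by rw [← hk]; exact hs⟩
  · rintro ⟨k, hk⟩
    exact ⟨t + k, hk, show ((t + (k:ℝ) : ℝ) : UnitAddCircle) = (t : UnitAddCircle) from coe_add_int t k⟩

lemma coe_add (s t : ℝ) : ((s + t : ℝ) : UnitAddCircle) = (s : UnitAddCircle) + (t : UnitAddCircle) := rfl

lemma coe_nsmul (i : ℕ) (t : ℝ) : ((i * t : ℝ) : UnitAddCircle) = i • (t : UnitAddCircle) := by
  induction i with
  | zero => simp
  | succ m ih =>
    push_cast
    rw [add_mul, one_mul, coe_add, ih, succ_nsmul]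


lemma change_cross {B : ℕ} (I : Fin B → Set UnitAddCircle) (a b : Fin B → ℝ)
    (hI : ∀ m, I m = (fun r : ℝ => (r : UnitAddCircle)) '' Set.Ico (a m) (b m))
    {w d : ℝ}
    (hne : ¬((((w : ℝ) : UnitAddCircle) ∈ (⋃ m, I m)) ↔
      (((w + d : ℝ) : UnitAddCircle) ∈ (⋃ m, I m)))) :
    ∃ (m : Fin B) (bo : Bool) (k : ℤ),
      (if bo then b m else a m) + (k:ℝ) ∈ Set.Ioc (min w (w+d)) (max w (w+d)) := by
  have main : ∀ m : Fin B,
      ¬((∃ k:ℤ, w + (k:ℝ) ∈ Set.Ico (a m) (b m)) ↔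
        (∃ k:ℤ, (w+d) + (k:ℝ) ∈ Set.Ico (a m) (b m))) →
      ∃ (m : Fin B) (bo : Bool) (k : ℤ),
        (if bo then b m else a m) + (k:ℝ) ∈ Set.Ioc (min w (w+d)) (max w (w+d)) := by
    intro m hm
    rcases le_total 0 d with hd | hd
    · have hmin : min w (w+d) = w := min_eq_left (by linarith)
      have hmax : max w (w+d) = w + d := max_eq_right (by linarith)
      obtain ⟨k, hk | hk⟩ := cross (by linarith : w ≤ w + d) hm
      · exact ⟨m, false, k, by rw [hmin, hmax]; simpa using hk⟩
      · exact ⟨m, true, k, by rw [hmin, hmax]; simpa using hk⟩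
    · have hmin : min w (w+d) = w + d := min_eq_right (by linarith)
      have hmax : max w (w+d) = w := max_eq_left (by linarith)
      have hm' : ¬((∃ k:ℤ, (w+d) + (k:ℝ) ∈ Set.Ico (a m) (b m)) ↔
          (∃ k:ℤ, w + (k:ℝ) ∈ Set.Ico (a m) (b m))) := fun h => hm h.symm
      obtain ⟨k, hk | hk⟩ := cross (by linarith : w + d ≤ w) hm'
      · exact ⟨m, false, k, by rw [hmin, hmax]; simpa using hk⟩
      · exact ⟨m, true, k, by rw [hmin, hmax]; simpa using hk⟩
  by_cases h1 : ((w : ℝ) : UnitAddCircle) ∈ ⋃ m, I m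
  · have h2 : ((w + d : ℝ) : UnitAddCircle) ∉ ⋃ m, I m :=
      fun hh => hne ⟨fun _ => hh, fun _ => h1⟩
    obtain ⟨m, hm⟩ := Set.mem_iUnion.mp h1
    have h2m : ((w + d : ℝ) : UnitAddCircle) ∉ I m := fun hh => h2 (Set.mem_iUnion.mpr ⟨m, hh⟩)
    rw [hI m, mem_arc_iff] at hm h2m
    exact main m (fun h => h2m (h.mp hm))
  · have h2 : ((w + d : ℝ) : UnitAddCircle) ∈ ⋃ m, I m := by
      by_contra h2
      exact hne ⟨fun hh => absurd hh h1, fun hh => absurd hh h2⟩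
    obtain ⟨m, hm⟩ := Set.mem_iUnion.mp h2
    have h1m : ((w : ℝ) : UnitAddCircle) ∉ I m := fun hh => h1 (Set.mem_iUnion.mpr ⟨m, hh⟩)
    rw [hI m, mem_arc_iff] at hm h1m
    exact main m (fun h => h1m (h.mpr hm))


lemma min_shift (w d : ℝ) : min w (w+d) = w + min 0 d := by
  rcases le_total 0 d with h|h
  · rw [min_eq_left (by linarith), min_eq_left h, add_zero]
  · rw [min_eq_right (by linarith), min_eq_right h]

lemma max_shift (w d : ℝ) : max w (w+d) = w + max 0 d := by
  rcases le_total 0 d with h|h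
  · rw [max_eq_right (by linarith), max_eq_right h]
  · rw [max_eq_left (by linarith), max_eq_left h, add_zero]

lemma max_sub_min (d : ℝ) : max 0 d - min 0 d = |d| := by
  rcases le_total 0 d with h|h
  · rw [max_eq_right h, min_eq_left h, abs_of_nonneg h]; ring
  · rw [max_eq_left h, min_eq_right h, abs_of_nonpos h]; ring

end Lem32

/-- An arc (interval) in the circle `S¹ = ℝ/ℤ`. -/
def IsArc (I : Set UnitAddCircle) : Prop :=
  ∃ a b : ℝ, I = (fun t : ℝ => (t : UnitAddCircle)) '' Set.Ico a b

/-- `f = 2·χ_U − 1`, where `U ⊆ S¹` is a union of `B` pairwise disjoint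
intervals with Lebesgue measure `m(U) = 1/2`. -/
def IsMeanZeroIndicator (B : ℕ) (f : UnitAddCircle → ℝ) : Prop :=
  ∃ I : Fin B → Set UnitAddCircle,
    (∀ l, IsArc (I l)) ∧
    Pairwise (Function.onFun Disjoint I) ∧
    volume (⋃ l, I l) = 1 / 2 ∧
    f = fun x => 2 * Set.indicator (⋃ l, I l) (fun _ => (1 : ℝ)) x - 1

set_option maxHeartbeats 2000000 in
/-- **Lemma 3.2.** With `σ_l = 𝒪_α[q_{n−1} + (l−1)q_n + 1, q_{n−1} + l·q_n]`, the set of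
`l ∈ [1, a_{n+1} − 1]` at which `s(σ_l)` changes has cardinality at most `2B`. -/
theorem card_changes_le (α : ℝ) (hα : α ∈ Set.Ioo (0 : ℝ) 1) (hirr : Irrational α)
    (B : ℕ) (hB : 0 < B)
    (f : UnitAddCircle → ℝ) (hf : IsMeanZeroIndicator B f)
    (q : ℕ → ℕ) (hq : ∀ m, (q m : ℝ) = (GenContFract.of α).dens m)
    (x : UnitAddCircle) (n : ℕ) (hn : 2 ≤ n)
    (A : ℕ) (hA : (GenContFract.of α).partDens.get? n = some (A : ℝ)) :
    {l : ℕ | 1 ≤ l ∧ l ≤ A - 1 ∧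
        (∑ i ∈ Finset.Icc (q (n - 1) + (l - 1) * q n + 1) (q (n - 1) + l * q n),
            f (x + i • (α : UnitAddCircle))) ≠
        (∑ i ∈ Finset.Icc (q (n - 1) + l * q n + 1) (q (n - 1) + (l + 1) * q n),
            f (x + i • (α : UnitAddCircle)))}.ncard ≤ 2 * B := by
  classical
  obtain ⟨N, rfl⟩ : ∃ N, n = N + 2 := ⟨n - 2, by omega⟩
  have hNsub : N + 2 - 1 = N + 1 := by omega
  rw [hNsub]
  obtain ⟨I, harc, hdisj, hvol, hfeq⟩ := hf
  choose a b hI using harc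
  obtain ⟨xt, rfl⟩ : ∃ r : ℝ, (r : UnitAddCircle) = x := ⟨x.out, QuotientAddGroup.out_eq' x⟩
  -- abbreviations
  set c : ℕ := q (N + 1) with hc
  set Q : ℕ := q (N + 2) with hQdef
  -- basic constants
  have hA1 : 1 ≤ A := by exact_mod_cast GenContFract.of_one_le_get?_partDen hA
  obtain ⟨P2, Q2', hP2, hQ2'⟩ := Lem32.exists_int_conts hirr (α := α) (N + 2)
  set d : ℝ := (Q : ℝ) * α - (P2 : ℝ) with hd
  have hdD : d = Lem32.D α (N + 2) := by
    rw [hd, Lem32.D, ← hP2, hQdef, hq (N + 2)]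
  have hεpos : 0 < |d| := by
    rw [hdD]; exact abs_pos.mpr (Lem32.D_ne hirr _)
  set β' : ℝ := |Lem32.D α (N + 1)| with hβ'
  -- β' = A * |D (N+2)| + |D (N+3)| > A * |d|
  have hAε : (A : ℝ) * |d| < β' := by
    have hrec := Lem32.D_rec hirr (m := N + 1) (b := (A : ℝ)) hA
    have hAnn : (0:ℝ) ≤ (A:ℝ) := by positivity
    rw [hdD, hβ']
    rcases Nat.even_or_odd (N + 1) with hp | hp
    · have h1 : 0 < Lem32.D α (N + 1) := Lem32.D_pos_of_even hirr hp
      have h2 : Lem32.D α (N + 2) < 0 := Lem32.D_neg_of_odd hirr hp.add_one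
      have h3 : 0 < Lem32.D α (N + 3) := Lem32.D_pos_of_even hirr (by
        have : N + 3 = (N + 1) + 2 := by omega
        rw [this]; exact hp.add even_two)
      rw [abs_of_neg h2, abs_of_pos h1]
      nlinarith
    · have h1 : Lem32.D α (N + 1) < 0 := Lem32.D_neg_of_odd hirr hp
      have h2 : 0 < Lem32.D α (N + 2) := Lem32.D_pos_of_even hirr (Odd.add_one hp)
      have h3 : Lem32.D α (N + 3) < 0 := Lem32.D_neg_of_odd hirr (by
        have : N + 3 = (N + 1) + 2 := by omega
        rw [this]; exact hp.add_even even_two)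
      rw [abs_of_pos h2, abs_of_neg h1]
      nlinarith
  -- β' ≤ 1/2
  have hQ2 : (2 : ℝ) ≤ ((GenContFract.of α).dens (N + 2)) := by
    have hfib := GenContFract.succ_nth_fib_le_of_nth_den (v := α) (n := N + 2)
      (Or.inr (Lem32.not_term hirr _))
    have : 2 ≤ Nat.fib (N + 3) := by
      have := Nat.fib_mono (show 3 ≤ N + 3 by omega)
      simpa [Nat.fib] using this
    calc (2:ℝ) ≤ (Nat.fib (N + 3) : ℝ) := by exact_mod_cast this
      _ ≤ _ := hfib
  have hβhalf : β' ≤ 1 / 2 := by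
    have h1 := Lem32.D_abs_le hirr (α := α) (N + 1)
    rw [hβ']
    calc |Lem32.D α (N+1)| ≤ 1 / (GenContFract.of α).dens (N + 2) := h1
      _ ≤ 1 / 2 := by
        apply one_div_le_one_div_of_le <;> linarith
  have hβpos : 0 < β' := by
    rw [hβ']; exact abs_pos.mpr (Lem32.D_ne hirr _)
  -- best approximation
  have hbest : ∀ z p : ℤ, z ≠ 0 → |(z : ℝ)| < (Q : ℝ) → β' ≤ |(z : ℝ) * α - (p : ℝ)| := by
    intro z p h1 h2
    exact Lem32.best_approx hirr (N + 1) z p h1 (by rw [← hq (N + 2)]; exact h2)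
  have hQpos : (1:ℝ) ≤ (Q:ℝ) := by
    rw [hQdef, hq (N + 2)]; exact Lem32.dens_pos hirr _
  -- geometry setup
  set u : ℕ → ℝ := fun j => xt + ((c : ℝ) + (j : ℝ)) * α with hu
  set w : ℕ → ℕ → ℝ := fun j l => u j + ((l : ℝ) - 1) * d with hw
  set E : Fin B × Bool → ℝ := fun mb => if mb.2 then b mb.1 else a mb.1 with hE
  set Φ : ℕ → Fin B × Bool → Prop := fun l mb =>
    ∃ (j : ℕ) (k : ℤ), 1 ≤ j ∧ j ≤ Q ∧
      E mb + (k : ℝ) ∈ Set.Ioc (w j l + min 0 d) (w j l + max 0 d) with hΦ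
  -- every change yields a crossing witness
  have hWit : ∀ l : ℕ, 1 ≤ l → l ≤ A - 1 →
      (∑ i ∈ Finset.Icc (c + (l - 1) * Q + 1) (c + l * Q),
          f ((xt : UnitAddCircle) + i • (α : UnitAddCircle))) ≠
      (∑ i ∈ Finset.Icc (c + l * Q + 1) (c + (l + 1) * Q),
          f ((xt : UnitAddCircle) + i • (α : UnitAddCircle))) →
      ∃ mb : Fin B × Bool, Φ l mb := by
    intro l hl1 hl2 hl3
    have e1 : (l - 1) * Q + Q = l * Q := by
      have h0 : l - 1 + 1 = l := Nat.sub_add_cancel hl1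
      calc (l - 1) * Q + Q = (l - 1 + 1) * Q := by ring
        _ = l * Q := by rw [h0]
    have h2 : c + (l - 1) * Q + 1 + Q = c + l * Q + 1 := by rw [← e1]; ring
    have h3 : c + l * Q + Q = c + (l + 1) * Q := by ring
    have hre : Finset.Icc (c + l * Q + 1) (c + (l + 1) * Q) =
        (Finset.Icc (c + (l - 1) * Q + 1) (c + l * Q)).map (addRightEmbedding Q) := by
      rw [Finset.map_add_right_Icc, h2, h3]
    rw [hre, Finset.sum_map] at hl3
    have hex : ∃ i ∈ Finset.Icc (c + (l - 1) * Q + 1) (c + l * Q),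
        f ((xt : UnitAddCircle) + i • (α : UnitAddCircle)) ≠
        f ((xt : UnitAddCircle) + (i + Q) • (α : UnitAddCircle)) := by
      by_contra hall
      push_neg at hall
      exact hl3 (Finset.sum_congr rfl fun i hi => by
        rw [hall i hi, addRightEmbedding_apply])
    obtain ⟨i, hiIcc, hine⟩ := hex
    rw [Finset.mem_Icc] at hiIcc
    have hiQ : c + (l - 1) * Q + 1 ≤ i ∧ i ≤ c + (l - 1) * Q + Q := by
      refine ⟨hiIcc.1, ?_⟩
      have := hiIcc.2
      omega
    set j : ℕ := i - (c + (l - 1) * Q) with hj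
    have hj1 : 1 ≤ j := by omega
    have hj2 : j ≤ Q := by omega
    have hieq : i = c + (l - 1) * Q + j := by omega
    -- coordinates
    have hcast : ((l - 1 : ℕ) : ℝ) = (l : ℝ) - 1 := by
      push_cast [hl1]; ring
    have hcoe : ∀ m : ℕ, ((xt : UnitAddCircle) + m • (α : UnitAddCircle)) =
        ((xt + (m : ℝ) * α : ℝ) : UnitAddCircle) := by
      intro m
      rw [Lem32.coe_add, Lem32.coe_nsmul]
    have hreal1 : xt + (i : ℝ) * α = w j l + ((((l : ℤ) - 1) * P2 : ℤ) : ℝ) := by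
      simp only [hw, hu]
      rw [hieq]
      push_cast [hcast]
      rw [hd]
      ring
    have hreal2 : xt + ((i + Q : ℕ) : ℝ) * α =
        (w j l + d) + (((((l : ℤ) - 1) * P2 + P2) : ℤ) : ℝ) := by
      simp only [hw, hu]
      rw [hieq]
      push_cast [hcast]
      rw [hd]
      ring
    have hpt1 : ((xt : UnitAddCircle) + i • (α : UnitAddCircle)) =
        ((w j l : ℝ) : UnitAddCircle) := by
      rw [hcoe i, hreal1, Lem32.coe_add_int]
    have hpt2 : ((xt : UnitAddCircle) + (i + Q) • (α : UnitAddCircle)) =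
        ((w j l + d : ℝ) : UnitAddCircle) := by
      rw [hcoe (i + Q), hreal2, Lem32.coe_add_int]
    rw [hpt1, hpt2] at hine
    -- membership change
    have hmem : ¬(((w j l : ℝ) : UnitAddCircle) ∈ (⋃ m, I m) ↔
        ((w j l + d : ℝ) : UnitAddCircle) ∈ (⋃ m, I m)) := by
      intro hiff
      apply hine
      rw [hfeq]
      simp only
      congr 2
      by_cases hz : ((w j l : ℝ) : UnitAddCircle) ∈ (⋃ m, I m)
      · rw [Set.indicator_of_mem hz, Set.indicator_of_mem (hiff.mp hz)]
      · rw [Set.indicator_of_notMem hz,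
          Set.indicator_of_notMem (fun hh => hz (hiff.mpr hh))]
    obtain ⟨m, bo, k, hk⟩ := Lem32.change_cross I a b hI hmem
    rw [Lem32.min_shift, Lem32.max_shift] at hk
    exact ⟨(m, bo), j, k, hj1, hj2, hk⟩
  -- the choice function
  set G : ℕ → Fin B × Bool := fun l =>
    if h : ∃ mb : Fin B × Bool, Φ l mb then h.choose else (⟨0, hB⟩, false) with hG
  have hGspec : ∀ l : ℕ, (∃ mb : Fin B × Bool, Φ l mb) → Φ l (G l) := by
    intro l h
    rw [hG]
    simp only [dif_pos h]
    exact h.choose_spec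
  -- the key injectivity computation
  have key : ∀ (jj jj' ll ll' : ℕ) (k k' : ℤ) (e : ℝ),
      1 ≤ jj → jj ≤ Q → 1 ≤ jj' → jj' ≤ Q →
      1 ≤ ll → ll ≤ A - 1 → 1 ≤ ll' → ll' ≤ A - 1 →
      e + (k : ℝ) ∈ Set.Ioc (w jj ll + min 0 d) (w jj ll + max 0 d) →
      e + (k' : ℝ) ∈ Set.Ioc (w jj' ll' + min 0 d) (w jj' ll' + max 0 d) →
      ll = ll' := by
    intro jj jj' ll ll' k k' e hj1 hj2 hj1' hj2' hl1 hl2 hl1' hl2' hk hk'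
    have hA2 : 2 ≤ A := by omega
    set t : ℝ := e + (k : ℝ) - w jj ll with ht
    set t' : ℝ := e + (k' : ℝ) - w jj' ll' with ht'
    have ht1 : min 0 d < t := by rw [ht]; have := hk.1; linarith
    have ht2 : t ≤ max 0 d := by rw [ht]; have := hk.2; linarith
    have ht1' : min 0 d < t' := by rw [ht']; have := hk'.1; linarith
    have ht2' : t' ≤ max 0 d := by rw [ht']; have := hk'.2; linarith
    have hdd := Lem32.max_sub_min d
    have htt : |t - t'| < |d| := by
      rw [abs_sub_lt_iff]; constructor <;> linarith
    have hE0 : ((jj : ℝ) - (jj' : ℝ)) * α + ((ll : ℝ) - (ll' : ℝ)) * d + (t - t') =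
        ((k - k' : ℤ) : ℝ) := by
      rw [ht, ht']
      simp only [hw, hu]
      push_cast
      ring
    have hllc : (ll : ℝ) ≤ (A : ℝ) - 1 := by
      have : ll + 1 ≤ A := by omega
      have := (Nat.cast_le (α := ℝ)).mpr this
      push_cast at this; linarith
    have hllc' : (ll' : ℝ) ≤ (A : ℝ) - 1 := by
      have : ll' + 1 ≤ A := by omega
      have := (Nat.cast_le (α := ℝ)).mpr this
      push_cast at this; linarith
    have hll1 : (1 : ℝ) ≤ (ll : ℝ) := by exact_mod_cast hl1
    have hll1' : (1 : ℝ) ≤ (ll' : ℝ) := by exact_mod_cast hl1'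
    have habsll : |(ll : ℝ) - (ll' : ℝ)| ≤ (A : ℝ) - 2 := by
      rw [abs_sub_le_iff]; constructor <;> linarith
    have hAR : (2:ℝ) ≤ (A:ℝ) := by exact_mod_cast hA2
    have hbound : |((ll : ℝ) - (ll' : ℝ)) * d + (t - t')| < (A : ℝ) * |d| := by
      calc |((ll : ℝ) - (ll' : ℝ)) * d + (t - t')|
          ≤ |((ll : ℝ) - (ll' : ℝ)) * d| + |t - t'| := abs_add_le _ _
        _ = |(ll : ℝ) - (ll' : ℝ)| * |d| + |t - t'| := by rw [abs_mul]
        _ < ((A : ℝ) - 2) * |d| + |d| := by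
            have h1 : |(ll : ℝ) - (ll' : ℝ)| * |d| ≤ ((A : ℝ) - 2) * |d| :=
              mul_le_mul_of_nonneg_right habsll (abs_nonneg d)
            linarith
        _ ≤ (A : ℝ) * |d| := by nlinarith
    by_cases hjj : jj = jj'
    · -- same j : conclude l = l'
      subst hjj
      have hEq2 : ((ll : ℝ) - (ll' : ℝ)) * d + (t - t') = ((k - k' : ℤ) : ℝ) := by
        rw [← hE0]; ring
      have hkk : (k - k' : ℤ) = 0 := by
        have h1 : |((k - k' : ℤ) : ℝ)| < 1 := by
          rw [← hEq2]
          calc |((ll : ℝ) - (ll' : ℝ)) * d + (t - t')| < (A : ℝ) * |d| := hbound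
            _ < β' := hAε
            _ ≤ 1 / 2 := hβhalf
            _ < 1 := by norm_num
        have h2 : |(k - k' : ℤ)| < 1 := by exact_mod_cast h1
        exact Int.abs_lt_one_iff.mp h2
      rw [hkk] at hEq2
      push_cast at hEq2
      have hld : |(ll : ℝ) - (ll' : ℝ)| * |d| < |d| := by
        have : ((ll : ℝ) - (ll' : ℝ)) * d = t' - t := by linarith
        calc |(ll : ℝ) - (ll' : ℝ)| * |d| = |((ll : ℝ) - (ll' : ℝ)) * d| := (abs_mul _ _).symm
          _ = |t' - t| := by rw [this]
          _ = |t - t'| := abs_sub_comm _ _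
          _ < |d| := htt
      have hll : |(ll : ℝ) - (ll' : ℝ)| < 1 := by
        by_contra hcon
        push_neg at hcon
        nlinarith
      have h9 : ((ll : ℤ) - (ll' : ℤ)) = 0 := by
        have h8 : |((ll : ℤ) - (ll' : ℤ) : ℤ)| < 1 := by
          have h7 : |(((ll : ℤ) - (ll' : ℤ) : ℤ) : ℝ)| < 1 := by push_cast; exact hll
          exact_mod_cast h7
        exact Int.abs_lt_one_iff.mp h8
      omega
    · -- different j : contradiction with best approximation
      exfalso
      set z : ℤ := (jj : ℤ) - (jj' : ℤ) with hz
      have hzne : z ≠ 0 := by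
        rw [hz]; intro h0; apply hjj; omega
      have hzlt : |(z : ℝ)| < (Q : ℝ) := by
        have h1 : (1:ℝ) ≤ (jj:ℝ) := by exact_mod_cast hj1
        have h2 : (jj:ℝ) ≤ (Q:ℝ) := by exact_mod_cast hj2
        have h1' : (1:ℝ) ≤ (jj':ℝ) := by exact_mod_cast hj1'
        have h2' : (jj':ℝ) ≤ (Q:ℝ) := by exact_mod_cast hj2'
        rw [hz]; push_cast
        rw [abs_sub_lt_iff]; constructor <;> linarith
      have hcontra := hbest z (k - k') hzne hzlt
      have heq3 : (z : ℝ) * α - ((k - k' : ℤ) : ℝ) =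
          -(((ll : ℝ) - (ll' : ℝ)) * d + (t - t')) := by
        rw [hz]; push_cast
        push_cast at hE0
        linarith
      rw [heq3, abs_neg] at hcontra
      have : β' < β' := lt_of_le_of_lt hcontra (lt_trans hbound hAε)
      exact lt_irrefl _ this
  -- injectivity and counting
  have hinj : Set.InjOn G {l : ℕ | 1 ≤ l ∧ l ≤ A - 1 ∧
      (∑ i ∈ Finset.Icc (c + (l - 1) * Q + 1) (c + l * Q),
          f ((xt : UnitAddCircle) + i • (α : UnitAddCircle))) ≠
      (∑ i ∈ Finset.Icc (c + l * Q + 1) (c + (l + 1) * Q),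
          f ((xt : UnitAddCircle) + i • (α : UnitAddCircle)))} := by
    rintro l ⟨hl1, hl2, hl3⟩ l' ⟨hl1', hl2', hl3'⟩ hGl
    obtain ⟨j, k, hj1, hj2, hk⟩ := hGspec l (hWit l hl1 hl2 hl3)
    obtain ⟨j', k', hj1', hj2', hk'⟩ := hGspec l' (hWit l' hl1' hl2' hl3')
    rw [hGl] at hk
    exact key j j' l l' k k' (E (G l')) hj1 hj2 hj1' hj2' hl1 hl2 hl1' hl2' hk hk'
  have hcount := Set.ncard_le_ncard_of_injOn G
    (fun a _ => Set.mem_univ (G a)) hinj Set.finite_univ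
  rw [Set.ncard_univ] at hcount
  calc _ ≤ Nat.card (Fin B × Bool) := hcount
    _ = 2 * B := by
      rw [Nat.card_eq_fintype_card, Fintype.card_prod, Fintype.card_fin, Fintype.card_bool]
      ring
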